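/- Let f_i > 0 with ∑ f_i = 1, β, γ > 0, and let λ^{(1)}, λ^{(2)} ∈ (0,∞)^k with ∑ f_i λ^{(1)}_i = ∑ f_i λ^{(2)}_i = 1 and ∑_i f_i φ(λ^{(1)}_i) ≤ ∑_i f_i φ(λ^{(2)}_i) for all convex φ: (0,∞) → ℝ. For m = 1,2, assume D^{(m)} > 0 solves (β/γ) ∑_i f_i λ^{(m)}_i/(1 + λ^{(m)}_i D^{(m)}) = 1, and set A^{(m)} = ∑_i f_i ln(1 + λ^{(m)}_i D^{(m)}) − (γ/β) D^{(m)}. Then A^{(1)} ≥ A^{(2)}. -/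
import Mathlib


theorem stmt_11 (k : ℕ) (hk : 1 ≤ k) (f lam1 lam2 : Fin k → ℝ)
    (hf : ∀ i, 0 < f i) (hfs : ∑ i, f i = 1)
    (hl1 : ∀ i, 0 < lam1 i) (hl2 : ∀ i, 0 < lam2 i)
    (hls1 : ∑ i, f i * lam1 i = 1) (hls2 : ∑ i, f i * lam2 i = 1)
    (hmaj : ∀ φ : ℝ → ℝ, ConvexOn ℝ (Set.Ioi 0) φ →
      ∑ i, f i * φ (lam1 i) ≤ ∑ i, f i * φ (lam2 i))
    (β γ : ℝ) (hβ : 0 < β) (hγ : 0 < γ)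
    (D1 D2 : ℝ) (hD1 : 0 < D1) (hD2 : 0 < D2)
    (hDeq1 : (β / γ) * ∑ i, f i * lam1 i / (1 + lam1 i * D1) = 1)
    (hDeq2 : (β / γ) * ∑ i, f i * lam2 i / (1 + lam2 i * D2) = 1)
    (A1 A2 : ℝ)
    (hA1 : A1 = (∑ i, f i * Real.log (1 + lam1 i * D1)) - (γ / β) * D1)
    (hA2 : A2 = (∑ i, f i * Real.log (1 + lam2 i * D2)) - (γ / β) * D2) :
    A2 ≤ A1 := by
  have h1D1 : ∀ i, (0:ℝ) < 1 + lam1 i * D1 := fun i => by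
    nlinarith [mul_pos (hl1 i) hD1]
  have h1D2 : ∀ i, (0:ℝ) < 1 + lam1 i * D2 := fun i => by
    nlinarith [mul_pos (hl1 i) hD2]
  -- the fixed-point equation gives the exact value of the sum
  have hS1 : ∑ i, f i * lam1 i / (1 + lam1 i * D1) = γ / β := by
    have h := hDeq1
    rw [div_mul_eq_mul_div, div_eq_one_iff_eq (ne_of_gt hγ)] at h
    rw [eq_div_iff (ne_of_gt hβ)]
    linarith
  -- tangent line inequality for log at D1
  have hA : ∀ i, Real.log (1 + lam1 i * D2) - Real.log (1 + lam1 i * D1) ≤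
      lam1 i / (1 + lam1 i * D1) * (D2 - D1) := by
    intro i
    have ha := h1D2 i
    have hb := h1D1 i
    have h := Real.log_le_sub_one_of_pos (div_pos ha hb)
    rw [Real.log_div (ne_of_gt ha) (ne_of_gt hb)] at h
    have heq : (1 + lam1 i * D2) / (1 + lam1 i * D1) - 1 =
        lam1 i / (1 + lam1 i * D1) * (D2 - D1) := by
      field_simp
      ring
    linarith [heq ▸ h]
  have hsumA : ∑ i, f i * Real.log (1 + lam1 i * D2) ≤
      (∑ i, f i * Real.log (1 + lam1 i * D1)) + (γ / β) * (D2 - D1) := by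
    have hle : ∑ i, f i * Real.log (1 + lam1 i * D2) ≤
        ∑ i, (f i * Real.log (1 + lam1 i * D1) +
          f i * (lam1 i / (1 + lam1 i * D1)) * (D2 - D1)) := by
      refine Finset.sum_le_sum fun i _ => ?_
      have h := mul_le_mul_of_nonneg_left (hA i) (hf i).le
      nlinarith [h]
    rw [Finset.sum_add_distrib] at hle
    have h2 : ∑ i, f i * (lam1 i / (1 + lam1 i * D1)) * (D2 - D1) =
        (γ / β) * (D2 - D1) := by
      rw [← Finset.sum_mul]
      congr 1
      rw [← hS1]
      exact Finset.sum_congr rfl fun i _ => (mul_div_assoc _ _ _).symm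
    linarith [h2 ▸ hle]
  -- concavity of x ↦ log (1 + D2 x) on (0,∞)
  have hconc : ConcaveOn ℝ (Set.Ioi 0) (fun x : ℝ => Real.log (1 + D2 * x)) := by
    have h := strictConcaveOn_log_Ioi.concaveOn.comp_affineMap
      (AffineMap.lineMap (1:ℝ) (1 + D2))
    have heq : (Real.log ∘ (AffineMap.lineMap (1:ℝ) (1 + D2))) =
        fun x : ℝ => Real.log (1 + D2 * x) := by
      funext x
      simp only [Function.comp_apply, AffineMap.lineMap_apply_ring]
      congr 1
      ring
    rw [heq] at h
    refine h.subset (fun x hx => ?_) (convex_Ioi 0)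
    simp only [Set.mem_preimage, AffineMap.lineMap_apply_ring, Set.mem_Ioi] at hx ⊢
    nlinarith [mul_pos hD2 (Set.mem_Ioi.mp hx)]
  have hB := hmaj (fun x => -Real.log (1 + D2 * x)) hconc.neg
  have hB' : ∑ i, f i * Real.log (1 + lam2 i * D2) ≤
      ∑ i, f i * Real.log (1 + lam1 i * D2) := by
    simp only [mul_neg] at hB
    rw [Finset.sum_neg_distrib, Finset.sum_neg_distrib, neg_le_neg_iff] at hB
    simpa [mul_comm] using hB
  rw [hA1, hA2]
  linarith [hsumA, hB']
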